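/- Let μ be a Borel measure on a metric space X that is finite on bounded sets and let s > 0. Then μ is absolutely continuous with respect to the s-dimensional packing measure 𝒫^s if and only if liminf_{r↓0} (2r)^{-s} μ(B(x,r)) < ∞ for μ-almost every x ∈ X. -/

import Mathlib

open MeasureTheory Metric Set Filter
open scoped ENNReal Topology

set_option linter.unusedSectionVars false

variable {X : Type*} [MetricSpace X] [MeasurableSpace X] [BorelSpace X]

/-- A `δ`-packing in `E`: a countable family of (center, radius) pairs whose centers lie in `E`,
with positive radii satisfying `2r ≤ δ`, and whose closed balls are pairwise disjoint. -/
def IsPacking (E : Set X) (δ : ℝ) (P : Set (X × ℝ)) : Prop :=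
  P.Countable ∧ (∀ p ∈ P, p.1 ∈ E ∧ 0 < p.2 ∧ 2 * p.2 ≤ δ) ∧
    P.Pairwise fun p q => Disjoint (closedBall p.1 p.2) (closedBall q.1 q.2)

/-- The `s`-dimensional packing premeasure `P^s` (radius convention). -/
noncomputable def packingPre (s : ℝ) (E : Set X) : ℝ≥0∞ :=
  ⨅ (δ : ℝ) (_ : 0 < δ), ⨆ (P : Set (X × ℝ)) (_ : IsPacking E δ P),
    ∑' p : P, ENNReal.ofReal ((2 * (p : X × ℝ).2) ^ s)

/-- The `s`-dimensional packing measure `𝒫^s`. -/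
noncomputable def packingMeasure (s : ℝ) (E : Set X) : ℝ≥0∞ :=
  ⨅ (F : ℕ → Set X) (_ : E ⊆ ⋃ i, F i), ∑' i, packingPre s (F i)

/-- The lower `s`-density of `μ` at `x`: `liminf_{r↓0} μ(B(x,r)) / (2r)^s`. -/
noncomputable def lowerDensity (μ : Measure X) (s : ℝ) (x : X) : ℝ≥0∞ :=
  Filter.liminf (fun r : ℝ => μ (closedBall x r) / ENNReal.ofReal ((2 * r) ^ s))
    (nhdsWithin 0 (Ioi 0))

/-- The sum of weights over any (possibly uncountable) admissible disjoint family is at most the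
supremum over packings. -/
lemma aux_tsum_le_packing_sup {s : ℝ} {F : Set X} {δ : ℝ} {u : Set (X × ℝ)}
    (hadm : ∀ p ∈ u, p.1 ∈ F ∧ 0 < p.2 ∧ 2 * p.2 ≤ δ)
    (hdisj : u.PairwiseDisjoint fun p : X × ℝ => closedBall p.1 p.2) :
    ∑' p : u, ENNReal.ofReal ((2 * (p : X × ℝ).2) ^ s) ≤
      ⨆ (P : Set (X × ℝ)) (_ : IsPacking F δ P),
        ∑' p : P, ENNReal.ofReal ((2 * (p : X × ℝ).2) ^ s) := by
  rw [ENNReal.tsum_eq_iSup_sum]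
  refine iSup_le fun v => ?_
  classical
  set v' : Finset (X × ℝ) := v.image Subtype.val with hv'
  have hsub : (↑v' : Set (X × ℝ)) ⊆ u := by
    intro p hp
    simp only [hv', Finset.coe_image, Set.mem_image] at hp
    obtain ⟨q, _, rfl⟩ := hp
    exact q.2
  have hpack : IsPacking F δ (↑v' : Set (X × ℝ)) :=
    ⟨v'.countable_toSet, fun p hp => hadm p (hsub hp),
      fun p hp q hq hpq => hdisj (hsub hp) (hsub hq) hpq⟩
  have h1 : ∑ p ∈ v, ENNReal.ofReal ((2 * (p : X × ℝ).2) ^ s)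
      = ∑' p : (↑v' : Set (X × ℝ)), ENNReal.ofReal ((2 * (p : X × ℝ).2) ^ s) := by
    rw [Finset.tsum_subtype' v' (fun p => ENNReal.ofReal ((2 * p.2) ^ s)), hv',
      Finset.sum_image (fun a _ b _ h => Subtype.val_injective h)]
  rw [h1]
  exact le_iSup₂ (f := fun (P : Set (X × ℝ)) (_ : IsPacking F δ P) =>
    ∑' p : P, ENNReal.ofReal ((2 * (p : X × ℝ).2) ^ s)) (↑v' : Set (X × ℝ)) hpack

/-- A family of pairs with positive radii and finite total weight is countable. -/
lemma aux_countable_of_tsum_ne_top {s : ℝ} {u : Set (X × ℝ)}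
    (hpos : ∀ p ∈ u, 0 < (2 * p.2) ^ s)
    (hfin : ∑' p : u, ENNReal.ofReal ((2 * (p : X × ℝ).2) ^ s) ≠ ⊤) : u.Countable := by
  have : ∀ n : ℕ, {p : u | ((n : ℝ≥0∞))⁻¹ ≤ ENNReal.ofReal ((2 * (p : X × ℝ).2) ^ s)}.Finite :=
    fun n => ENNReal.finite_const_le_of_tsum_ne_top hfin (ENNReal.inv_ne_zero.mpr
      (by exact_mod_cast ENNReal.natCast_ne_top n))
  have huniv : (univ : Set u) = ⋃ n : ℕ,
      {p : u | ((n : ℝ≥0∞))⁻¹ ≤ ENNReal.ofReal ((2 * (p : X × ℝ).2) ^ s)} := by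
    refine Subset.antisymm (fun p _ => ?_) (subset_univ _)
    have hp0 : (0 : ℝ≥0∞) < ENNReal.ofReal ((2 * (p : X × ℝ).2) ^ s) :=
      ENNReal.ofReal_pos.mpr (hpos p p.2)
    obtain ⟨n, hn⟩ := ENNReal.exists_inv_nat_lt hp0.ne'
    exact mem_iUnion.mpr ⟨n, hn.le⟩
  have : Countable u := by
    rw [← Set.countable_univ_iff, huniv]
    exact Set.countable_iUnion fun n => (this n).countable
  exact Set.countable_coe_iff.mp this

/-- Core estimate for the "if" direction: on a set where the lower density is `< b`, the measure
is controlled by the packing premeasure of any superset. -/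
lemma aux_mu_le_mul_packingPre (μ : Measure X)
    (hloc : ∀ B : Set X, Bornology.IsBounded B → μ B < ⊤)
    {s : ℝ} (hs : 0 < s) {b : ℝ≥0∞} (hb0 : b ≠ 0) (hbt : b ≠ ⊤) {D F : Set X}
    (hDF : D ⊆ F) (hD : ∀ x ∈ D, lowerDensity μ s x < b) :
    μ D ≤ (b * ENNReal.ofReal (5 ^ s)) * packingPre s F := by
  set C := b * ENNReal.ofReal (5 ^ s) with hC
  have h5s : (0:ℝ) < 5 ^ s := Real.rpow_pos_of_pos (by norm_num) s
  have hC0 : C ≠ 0 := mul_ne_zero hb0 (ENNReal.ofReal_pos.mpr h5s).ne'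
  have hCt : C ≠ ⊤ := ENNReal.mul_ne_top hbt ENNReal.ofReal_ne_top
  have key : ∀ δ : ℝ, 0 < δ →
      μ D ≤ C * ⨆ (P : Set (X × ℝ)) (_ : IsPacking F δ P),
        ∑' p : P, ENNReal.ofReal ((2 * (p : X × ℝ).2) ^ s) := by
    intro δ hδ
    set S := ⨆ (P : Set (X × ℝ)) (_ : IsPacking F δ P),
        ∑' p : P, ENNReal.ofReal ((2 * (p : X × ℝ).2) ^ s) with hS
    by_cases hStop : S = ⊤
    · rw [hStop, ENNReal.mul_top hC0]; exact le_top
    set t : Set (X × ℝ) := {p | p.1 ∈ D ∧ 0 < p.2 ∧ 2 * p.2 ≤ δ ∧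
      μ (closedBall p.1 (5 * p.2)) < b * ENNReal.ofReal ((2 * (5 * p.2)) ^ s)} with ht
    obtain ⟨u, hut, hdisj, hcov⟩ :=
      Vitali.exists_disjoint_subfamily_covering_enlargement_closedBall t Prod.fst Prod.snd
        (δ / 2) (fun p hp => by have := hp.2.2.1; linarith) 5 (by norm_num)
    have hadm : ∀ p ∈ u, p.1 ∈ F ∧ 0 < p.2 ∧ 2 * p.2 ≤ δ := fun p hp =>
      ⟨hDF (hut hp).1, (hut hp).2.1, (hut hp).2.2.1⟩
    have hsum : ∑' p : u, ENNReal.ofReal ((2 * (p : X × ℝ).2) ^ s) ≤ S :=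
      aux_tsum_le_packing_sup hadm hdisj
    have hcount : u.Countable :=
      aux_countable_of_tsum_ne_top
        (fun p hp => Real.rpow_pos_of_pos (by have := (hadm p hp).2.1; linarith) s)
        (ne_top_of_le_ne_top hStop hsum)
    have hDcov : D ⊆ ⋃ p ∈ u, closedBall p.1 (5 * p.2) := by
      intro x hx
      have hfreq : ∃ᶠ ρ in 𝓝[>] (0:ℝ),
          μ (closedBall x ρ) / ENNReal.ofReal ((2 * ρ) ^ s) < b := by
        have hlt : liminf (fun ρ : ℝ => μ (closedBall x ρ) / ENNReal.ofReal ((2 * ρ) ^ s))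
            (𝓝[>] (0:ℝ)) < b := hD x hx
        exact frequently_lt_of_liminf_lt (by isBoundedDefault) hlt
      obtain ⟨ρ, hρlt, hρmem⟩ :=
        (hfreq.and_eventually (Ioo_mem_nhdsGT
          (by linarith : (0:ℝ) < 5 * δ / 2))).exists
      have hρ0 : 0 < ρ := hρmem.1
      have hofr0 : ENNReal.ofReal ((2 * ρ) ^ s) ≠ 0 :=
        (ENNReal.ofReal_pos.mpr (Real.rpow_pos_of_pos (by linarith) s)).ne'
      have hofrt : ENNReal.ofReal ((2 * ρ) ^ s) ≠ ⊤ := ENNReal.ofReal_ne_top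
      have hball : μ (closedBall x ρ) < b * ENNReal.ofReal ((2 * ρ) ^ s) := by
        rw [ENNReal.div_lt_iff (Or.inl hofr0) (Or.inl hofrt)] at hρlt
        exact hρlt
      have hpt : (x, ρ / 5) ∈ t := by
        refine ⟨hx, by linarith, by linarith [hρmem.2], ?_⟩
        rw [show 5 * (ρ / 5) = ρ by ring]
        exact hball
      obtain ⟨q, hqu, hq⟩ := hcov (x, ρ / 5) hpt
      exact mem_biUnion hqu (hq (mem_closedBall_self (by linarith)))
    have hterm : ∀ p : u, μ (closedBall (p : X × ℝ).1 (5 * (p : X × ℝ).2)) ≤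
        C * ENNReal.ofReal ((2 * (p : X × ℝ).2) ^ s) := by
      intro p
      have hp := hut p.2
      have hr0 : (0:ℝ) < (p : X × ℝ).2 := hp.2.1
      have h1 : (2 * (5 * (p : X × ℝ).2)) ^ s = 5 ^ s * (2 * (p : X × ℝ).2) ^ s := by
        rw [show 2 * (5 * (p : X × ℝ).2) = 5 * (2 * (p : X × ℝ).2) by ring,
          Real.mul_rpow (by norm_num) (by linarith)]
      calc μ (closedBall (p : X × ℝ).1 (5 * (p : X × ℝ).2))
          ≤ b * ENNReal.ofReal ((2 * (5 * (p : X × ℝ).2)) ^ s) := hp.2.2.2.le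
        _ = C * ENNReal.ofReal ((2 * (p : X × ℝ).2) ^ s) := by
            rw [h1, ENNReal.ofReal_mul (le_of_lt h5s), hC, mul_assoc]
    calc μ D ≤ μ (⋃ p ∈ u, closedBall p.1 (5 * p.2)) := measure_mono hDcov
      _ ≤ ∑' p : u, μ (closedBall (p : X × ℝ).1 (5 * (p : X × ℝ).2)) :=
          measure_biUnion_le μ hcount _
      _ ≤ ∑' p : u, C * ENNReal.ofReal ((2 * (p : X × ℝ).2) ^ s) :=
          ENNReal.tsum_le_tsum hterm
      _ = C * ∑' p : u, ENNReal.ofReal ((2 * (p : X × ℝ).2) ^ s) := ENNReal.tsum_mul_left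
      _ ≤ C * S := by gcongr
  have hdiv : μ D / C ≤ packingPre s F := by
    refine le_iInf₂ fun δ hδ => ?_
    rw [ENNReal.div_le_iff_le_mul (Or.inl hC0) (Or.inl hCt)]
    exact (key δ hδ).trans (mul_comm C _).le
  calc μ D = μ D / C * C := (ENNReal.div_mul_cancel hC0 hCt).symm
    _ ≤ packingPre s F * C := by gcongr
    _ = C * packingPre s F := mul_comm _ _

/-- The "if" direction core: a set of finite lower density with null packing measure is null. -/
lemma aux_mu_eq_zero (μ : Measure X)
    (hloc : ∀ B : Set X, Bornology.IsBounded B → μ B < ⊤)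
    {s : ℝ} (hs : 0 < s) {b : ℝ≥0∞} (hb0 : b ≠ 0) (hbt : b ≠ ⊤) {A : Set X}
    (hA : ∀ x ∈ A, lowerDensity μ s x < b) (hp : packingMeasure s A = 0) : μ A = 0 := by
  set C := b * ENNReal.ofReal (5 ^ s) with hC
  have h5s : (0:ℝ) < 5 ^ s := Real.rpow_pos_of_pos (by norm_num) s
  have hC0 : C ≠ 0 := mul_ne_zero hb0 (ENNReal.ofReal_pos.mpr h5s).ne'
  have hCt : C ≠ ⊤ := ENNReal.mul_ne_top hbt ENNReal.ofReal_ne_top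
  refine le_antisymm ?_ (zero_le)
  refine ENNReal.le_of_forall_pos_le_add fun ε hε _ => ?_
  rw [zero_add]
  have hlt : packingMeasure s A < (ε : ℝ≥0∞) / C := by
    rw [hp]
    exact ENNReal.div_pos (by exact_mod_cast hε.ne') hCt
  rw [packingMeasure] at hlt
  obtain ⟨F, hF⟩ := iInf_lt_iff.mp hlt
  obtain ⟨hcover, hsum⟩ := iInf_lt_iff.mp hF
  calc μ A ≤ μ (⋃ i, A ∩ F i) := by
        refine measure_mono fun x hx => ?_
        obtain ⟨_, ⟨i, rfl⟩, hi⟩ := hcover hx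
        exact mem_iUnion.mpr ⟨i, hx, hi⟩
    _ ≤ ∑' i, μ (A ∩ F i) := measure_iUnion_le _
    _ ≤ ∑' i, C * packingPre s (F i) :=
        ENNReal.tsum_le_tsum fun i => aux_mu_le_mul_packingPre μ hloc hs hb0 hbt
          inter_subset_right (fun x hx => hA x hx.1)
    _ = C * ∑' i, packingPre s (F i) := ENNReal.tsum_mul_left
    _ ≤ C * ((ε : ℝ≥0∞) / C) := by gcongr
    _ = ε := ENNReal.mul_div_cancel hC0 hCt

/-- The uniform-scale density sets used in the "only if" direction are closed. -/
lemma aux_isClosed_G (μ : Measure X) (s : ℝ) {b : ℝ≥0∞} (hb : b ≠ ⊤) (c : ℝ) :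
    IsClosed {x : X | ∀ r : ℝ, 0 < r → r ≤ c →
      b * ENNReal.ofReal ((2 * r) ^ s) ≤ μ (closedBall x r)} := by
  refine isClosed_of_closure_subset fun x hx r hr hrc => ?_
  have main : ∀ r' ∈ Ioo (0:ℝ) r, b * ENNReal.ofReal ((2 * r') ^ s) ≤ μ (closedBall x r) := by
    rintro r' ⟨hr'0, hr'r⟩
    obtain ⟨y, hyG, hyd⟩ := Metric.mem_closure_iff.mp hx (r - r') (by linarith)
    have hsub : closedBall y r' ⊆ closedBall x r := by
      apply closedBall_subset_closedBall'
      rw [dist_comm]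
      linarith
    exact le_trans (hyG r' hr'0 (le_of_lt (lt_of_lt_of_le hr'r hrc))) (measure_mono hsub)
  have hcont : ContinuousAt (fun r' : ℝ => b * ENNReal.ofReal ((2 * r') ^ s)) r := by
    refine (ENNReal.continuous_const_mul hb).continuousAt.comp ?_
    refine ENNReal.continuous_ofReal.continuousAt.comp ?_
    exact (Real.continuousAt_rpow_const (2 * r) s
      (Or.inl (by positivity))).comp ((continuous_const.mul continuous_id).continuousAt)
  refine le_of_tendsto (hcont.tendsto.mono_left (nhdsWithin_le_nhds (s := Iio r))) ?_
  filter_upwards [Ioo_mem_nhdsLT hr] with r' hr'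
  exact main r' hr'

/-- `μ ≪ 𝒫^s` if and only if the lower `s`-density of `μ` is finite `μ`-almost everywhere. -/
theorem ac_packing_iff_lowerDensity_finite
    (μ : Measure X) (hloc : ∀ B : Set X, Bornology.IsBounded B → μ B < ⊤)
    (s : ℝ) (hs : 0 < s) :
    (∀ E : Set X, MeasurableSet E → packingMeasure s E = 0 → μ E = 0) ↔
      (∀ᵐ x ∂μ, lowerDensity μ s x < ⊤) := by
  constructor
  · -- "only if" direction
    intro hAC
    rw [ae_iff]
    by_contra hne
    have hXne : Nonempty X := by
      by_contra hempty
      rw [not_nonempty_iff] at hempty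
      exact hne (by simp [Set.eq_empty_of_isEmpty])
    obtain ⟨x₀⟩ := hXne
    set Ebad := {x : X | ¬ lowerDensity μ s x < ⊤} with hEbad
    have hcover : Ebad ⊆ ⋃ n : ℕ, Ebad ∩ closedBall x₀ n := by
      intro x hx
      obtain ⟨n, hn⟩ := exists_nat_ge (dist x x₀)
      exact mem_iUnion.mpr ⟨n, hx, mem_closedBall.mpr hn⟩
    have hpos : ∃ n : ℕ, μ (Ebad ∩ closedBall x₀ n) ≠ 0 := by
      by_contra hall
      push_neg at hall
      refine hne (le_antisymm ?_ (zero_le))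
      refine le_trans (measure_mono hcover) (le_trans (measure_iUnion_le _) ?_)
      simp [hall]
    obtain ⟨n, hm0⟩ := hpos
    set D := Ebad ∩ closedBall x₀ (n : ℝ) with hDdef
    set m := μ D with hm
    have hmt : m ≠ ⊤ :=
      (lt_of_le_of_lt (measure_mono inter_subset_right) (hloc _ isBounded_closedBall)).ne
    set G : ℕ → ℕ → Set X := fun k i => {x : X | ∀ r : ℝ, 0 < r → r ≤ ((k : ℝ) + 1)⁻¹ →
      ((2 : ℝ≥0∞) ^ i) * ENNReal.ofReal ((2 * r) ^ s) ≤ μ (closedBall x r)} with hG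
    have h2it : ∀ i : ℕ, ((2 : ℝ≥0∞) ^ i) ≠ ⊤ := fun i =>
      ENNReal.pow_ne_top (by norm_num)
    have h2i0 : ∀ i : ℕ, ((2 : ℝ≥0∞) ^ i) ≠ 0 := fun i => pow_ne_zero i (by norm_num)
    have hGclosed : ∀ k i, IsClosed (G k i) := fun k i => aux_isClosed_G μ s (h2it i) _
    have hGmono : ∀ i, Monotone fun k => D ∩ G k i := by
      intro i k k' hkk'
      refine inter_subset_inter_right D fun x hx r hr hrle => ?_
      refine hx r hr (hrle.trans ?_)
      have h1 : (0:ℝ) < (k:ℝ) + 1 := by positivity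
      have h2 : (k:ℝ) + 1 ≤ (k':ℝ) + 1 := by
        have : (k:ℝ) ≤ (k':ℝ) := by exact_mod_cast hkk'
        linarith
      exact inv_anti₀ h1 h2
    have hDG : ∀ i : ℕ, D ⊆ ⋃ k : ℕ, D ∩ G k i := by
      intro i x hx
      have hldtop : lowerDensity μ s x = ⊤ := top_le_iff.mp (not_lt.mp hx.1)
      have hev : ∀ᶠ ρ in 𝓝[>] (0:ℝ), ((2 : ℝ≥0∞) ^ i) <
          μ (closedBall x ρ) / ENNReal.ofReal ((2 * ρ) ^ s) := by
        refine eventually_lt_of_lt_liminf ?_ (by isBoundedDefault)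
        have : liminf (fun ρ : ℝ => μ (closedBall x ρ) / ENNReal.ofReal ((2 * ρ) ^ s))
            (𝓝[>] (0:ℝ)) = ⊤ := hldtop
        rw [this]
        exact (h2it i).lt_top
      obtain ⟨ε, hε, hball⟩ := Metric.mem_nhdsWithin_iff.mp hev
      obtain ⟨kk, hkk⟩ := exists_nat_one_div_lt hε
      refine mem_iUnion.mpr ⟨kk, hx, fun r hr0 hrle => ?_⟩
      have hrε : r < ε := by
        rw [one_div] at hkk
        exact lt_of_le_of_lt hrle hkk
      have hrmem : r ∈ Metric.ball (0:ℝ) ε ∩ Ioi 0 := by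
        constructor
        · rw [mem_ball, Real.dist_eq, sub_zero, abs_of_pos hr0]
          exact hrε
        · exact hr0
      have hP : ((2:ℝ≥0∞) ^ i) < μ (closedBall x r) / ENNReal.ofReal ((2 * r) ^ s) :=
        hball hrmem
      have hofr0 : ENNReal.ofReal ((2 * r) ^ s) ≠ 0 :=
        (ENNReal.ofReal_pos.mpr (Real.rpow_pos_of_pos (by linarith) s)).ne'
      rw [ENNReal.lt_div_iff_mul_lt (Or.inl hofr0) (Or.inl ENNReal.ofReal_ne_top)] at hP
      exact hP.le
    have hupto : ∀ i : ℕ, ∃ k : ℕ, m / 2 < μ (D ∩ G k i) := by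
      intro i
      have hunion : (⋃ k, D ∩ G k i) = D :=
        Subset.antisymm (iUnion_subset fun k => inter_subset_left) (hDG i)
      have heq : μ D = ⨆ k, μ (D ∩ G k i) := by
        rw [← (hGmono i).measure_iUnion, hunion]
      have hhalf : m / 2 < m := ENNReal.half_lt_self hm0 hmt
      have hlt2 : m / 2 < ⨆ k, μ (D ∩ G k i) := by
        calc m / 2 < m := hhalf
          _ = ⨆ k, μ (D ∩ G k i) := by rw [hm, heq]
      exact lt_iSup_iff.mp hlt2
    choose k hk using hupto
    set K : ℕ → Set X := fun i => closure (D ∩ G (k i) i) with hK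
    have hKclosed : ∀ i, IsClosed (K i) := fun i => isClosed_closure
    have hKG : ∀ i, K i ⊆ G (k i) i := fun i =>
      closure_minimal inter_subset_right (hGclosed _ _)
    have hKball : ∀ i, K i ⊆ closedBall x₀ (n : ℝ) := fun i =>
      closure_minimal (fun x hx => hx.1.2) isClosed_closedBall
    have hKm : ∀ i, m / 2 ≤ μ (K i) := fun i => (hk i).le.trans (measure_mono subset_closure)
    set M := μ (closedBall x₀ ((n : ℝ) + 1)) with hMdef
    have hMt : M ≠ ⊤ := (hloc _ isBounded_closedBall).ne
    have hpre : ∀ i, packingPre s (K i) ≤ M / 2 ^ i := by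
      intro i
      set δ := ((k i : ℝ) + 1)⁻¹ with hδdef
      have hδpos : 0 < δ := by positivity
      have hδ1 : δ ≤ 1 := by
        rw [hδdef]
        have h0 : (0:ℝ) ≤ (k i : ℝ) := Nat.cast_nonneg _
        exact inv_le_one_of_one_le₀ (by linarith)
      refine le_trans (iInf₂_le δ hδpos) ?_
      refine iSup₂_le fun P hP => ?_
      obtain ⟨hPc, hPadm, hPdisj⟩ := hP
      have hball1 : ∀ p ∈ P, ((2:ℝ≥0∞) ^ i) * ENNReal.ofReal ((2 * p.2) ^ s) ≤
          μ (closedBall p.1 p.2) := by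
        intro p hp
        have h1 := hPadm p hp
        have hrle : p.2 ≤ δ := by
          have := h1.2.2
          have := h1.2.1
          linarith
        exact hKG i h1.1 p.2 h1.2.1 hrle
      have hsub : ∀ p ∈ P, closedBall p.1 p.2 ⊆ closedBall x₀ ((n : ℝ) + 1) := by
        intro p hp
        have h1 := hPadm p hp
        have hd : dist p.1 x₀ ≤ (n : ℝ) := mem_closedBall.mp (hKball i h1.1)
        have hr1 : p.2 ≤ 1 := by
          have := h1.2.2
          have := h1.2.1
          linarith
        exact closedBall_subset_closedBall' (by linarith)
      have hdisjU : μ (⋃ p ∈ P, closedBall p.1 p.2) =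
          ∑' p : P, μ (closedBall (p : X × ℝ).1 (p : X × ℝ).2) :=
        measure_biUnion hPc hPdisj fun p _ => measurableSet_closedBall
      have hmain : ((2:ℝ≥0∞) ^ i) * ∑' p : P, ENNReal.ofReal ((2 * (p : X × ℝ).2) ^ s) ≤ M := by
        rw [← ENNReal.tsum_mul_left]
        refine le_trans (ENNReal.tsum_le_tsum fun p => hball1 p p.2) ?_
        rw [← hdisjU]
        exact measure_mono (iUnion₂_subset hsub)
      rw [ENNReal.le_div_iff_mul_le (Or.inl (h2i0 i)) (Or.inl (h2it i)), mul_comm]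
      exact hmain
    set L := ⋂ N : ℕ, ⋃ j : ℕ, K (N + j) with hL
    have hLmeas : MeasurableSet L :=
      MeasurableSet.iInter fun N => MeasurableSet.iUnion fun j => (hKclosed _).measurableSet
    have hLm : m / 2 ≤ μ L := by
      have hanti : Antitone fun N : ℕ => ⋃ j : ℕ, K (N + j) := by
        intro N N' hNN'
        refine iUnion_subset fun j => ?_
        have heq : N' + j = N + (N' - N + j) := by omega
        rw [heq]
        exact subset_iUnion (fun j' => K (N + j')) _
      have hfin : μ (⋃ j : ℕ, K (0 + j)) ≠ ⊤ := by
        refine (lt_of_le_of_lt (measure_mono (iUnion_subset fun j => hKball _))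
          (hloc _ isBounded_closedBall)).ne
      have heq := hanti.measure_iInter
        (fun N => (MeasurableSet.iUnion fun j => (hKclosed _).measurableSet).nullMeasurableSet)
        ⟨0, hfin⟩
      rw [hL, heq]
      refine le_iInf fun N => le_trans (hKm N) (measure_mono ?_)
      simpa using subset_iUnion (fun j => K (N + j)) 0
    have hLpack : packingMeasure s L = 0 := by
      have hbound : ∀ N : ℕ, packingMeasure s L ≤ (M * 2) * ((2:ℝ≥0∞)⁻¹) ^ N := by
        intro N
        have hcovL : L ⊆ ⋃ j, K (N + j) := iInter_subset _ N
        have h1 : packingMeasure s L ≤ ∑' j, packingPre s (K (N + j)) :=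
          iInf_le_of_le (fun j => K (N + j)) (iInf_le_of_le hcovL le_rfl)
        refine h1.trans ?_
        have h2 : ∀ j : ℕ, packingPre s (K (N + j)) ≤
            (M * ((2:ℝ≥0∞)⁻¹) ^ N) * ((2:ℝ≥0∞)⁻¹) ^ j := by
          intro j
          refine (hpre (N + j)).trans (le_of_eq ?_)
          rw [div_eq_mul_inv, pow_add, ENNReal.mul_inv (Or.inl (h2i0 N)) (Or.inl (h2it N)),
            ← mul_assoc, ← ENNReal.inv_pow, ← ENNReal.inv_pow]
        refine le_trans (ENNReal.tsum_le_tsum h2) ?_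
        rw [ENNReal.tsum_mul_left, ENNReal.tsum_geometric, ENNReal.one_sub_inv_two, inv_inv]
        exact le_of_eq (by ring)
      refine le_antisymm ?_ (zero_le)
      have htend : Tendsto (fun N : ℕ => (M * 2) * ((2:ℝ≥0∞)⁻¹) ^ N) atTop (𝓝 0) := by
        have h2 : ((2:ℝ≥0∞)⁻¹) < 1 := by
          rw [ENNReal.inv_lt_one]
          norm_num
        have ht1 := ENNReal.tendsto_pow_atTop_nhds_zero_of_lt_one h2
        have ht2 := ENNReal.Tendsto.const_mul (a := M * 2) ht1
          (Or.inr (ENNReal.mul_ne_top hMt (by norm_num)))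
        simpa using ht2
      exact ge_of_tendsto htend (Eventually.of_forall hbound)
    have hL0 := hAC L hLmeas hLpack
    have hm2 : m / 2 ≠ 0 := by
      simp only [ne_eq, ENNReal.div_eq_zero_iff, not_or]
      exact ⟨hm0, by norm_num⟩
    exact hm2 (le_antisymm (hL0 ▸ hLm) (zero_le))
  · -- "if" direction
    intro hae E _hE hP
    have hN : μ {x | ¬ lowerDensity μ s x < ⊤} = 0 := ae_iff.mp hae
    have hsub : E ⊆ {x | ¬ lowerDensity μ s x < ⊤} ∪
        ⋃ b : ℕ, E ∩ {x | lowerDensity μ s x < (b : ℝ≥0∞) + 1} := by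
      intro x hx
      by_cases h : lowerDensity μ s x < ⊤
      · obtain ⟨b, hb⟩ := ENNReal.exists_nat_gt h.ne
        exact Or.inr (mem_iUnion.mpr ⟨b, hx, lt_of_lt_of_le hb le_self_add⟩)
      · exact Or.inl h
    have hzero : ∀ b : ℕ, μ (E ∩ {x | lowerDensity μ s x < (b : ℝ≥0∞) + 1}) = 0 := by
      intro b
      have hmono : packingMeasure s (E ∩ {x | lowerDensity μ s x < (b : ℝ≥0∞) + 1}) ≤
          packingMeasure s E :=
        le_iInf₂ fun F hF => iInf₂_le F (inter_subset_left.trans hF)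
      refine aux_mu_eq_zero μ hloc hs (b := (b : ℝ≥0∞) + 1) ?_ ?_
        (fun x hx => hx.2) (le_antisymm (hP ▸ hmono) (zero_le))
      · simp
      · simp [ENNReal.add_eq_top]
    refine le_antisymm ?_ (zero_le)
    calc μ E ≤ μ ({x | ¬ lowerDensity μ s x < ⊤} ∪
          ⋃ b : ℕ, E ∩ {x | lowerDensity μ s x < (b : ℝ≥0∞) + 1}) := measure_mono hsub
      _ ≤ μ {x | ¬ lowerDensity μ s x < ⊤} +
          μ (⋃ b : ℕ, E ∩ {x | lowerDensity μ s x < (b : ℝ≥0∞) + 1}) := measure_union_le _ _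
      _ ≤ 0 + ∑' b : ℕ, μ (E ∩ {x | lowerDensity μ s x < (b : ℝ≥0∞) + 1}) := by
          rw [hN]
          exact add_le_add le_rfl (measure_iUnion_le _)
      _ ≤ 0 := by simp [hzero]
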